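/- Let d ≥ 1, let ρ : SL(2,ℤ) → GL(d,ℂ) be a group homomorphism whose values are unitary d×d matrices, and let v₁,…,v_d : ℍ → ℂ be holomorphic functions satisfying the vector-valued modular transformation law v_i(γτ) = Σ_{j=1}^d ρ(γ)_{ij} v_j(τ) for every γ ∈ SL(2,ℤ) and τ ∈ ℍ. Suppose each component has a Fourier expansion at the cusp i∞ of the form v_i(τ) = e^{2πi m_i τ} · g_i(e^{2πiτ/b_i}), where m_i ∈ ℝ, b_i is a positive integer, and g_i : ℂ → ℂ is holomorphic on the open unit disc with g_i(0) ≠ 0. If there exist an integer N ≥ 1 and an index i₀ such that v_{i₀} is invariant under the principal congruence subgroup Γ(N) (i.e. v_{i₀}(γτ) = v_{i₀}(τ) for all γ ∈ Γ(N), τ ∈ ℍ) and m_{i₀} ≠ 0, then min_i m_i < 0; that is, there exists an index j with m_j < 0. -/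

import Mathlib

open scoped Manifold MatrixGroups UpperHalfPlane Real
open Complex

/-- If a weight-0 vector-valued modular form for a unitary representation of `SL(2,ℤ)` has a
component that is invariant under a principal congruence subgroup `Γ(N)` and whose leading
Fourier exponent is nonzero, then some component has a negative leading exponent. -/
theorem stmt_0 (d : ℕ) (hd : 1 ≤ d)
    (ρ : SL(2, ℤ) →* Matrix.GeneralLinearGroup (Fin d) ℂ)
    (hρ : ∀ γ : SL(2, ℤ), (ρ γ : Matrix (Fin d) (Fin d) ℂ) ∈ Matrix.unitaryGroup (Fin d) ℂ)
    (v : Fin d → ℍ → ℂ)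
    (hol : ∀ i, MDifferentiable 𝓘(ℂ) 𝓘(ℂ) (v i))
    (htrans : ∀ (γ : SL(2, ℤ)) (τ : ℍ) (i : Fin d),
      v i (γ • τ) = ∑ j, (ρ γ : Matrix (Fin d) (Fin d) ℂ) i j * v j τ)
    (m : Fin d → ℝ) (b : Fin d → ℕ) (hb : ∀ i, 0 < b i)
    (g : Fin d → ℂ → ℂ)
    (hg : ∀ i, DifferentiableOn ℂ (g i) (Metric.ball 0 1))
    (hg0 : ∀ i, g i 0 ≠ 0)
    (hFourier : ∀ (i : Fin d) (τ : ℍ),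
      v i τ = Complex.exp (2 * (Real.pi : ℂ) * Complex.I * (m i : ℂ) * (τ : ℂ)) *
        g i (Complex.exp (2 * (Real.pi : ℂ) * Complex.I * (τ : ℂ) / (b i : ℂ))))
    (N : ℕ) (hN : 1 ≤ N) (i₀ : Fin d)
    (hinv : ∀ γ ∈ CongruenceSubgroup.Gamma N, ∀ τ : ℍ, v i₀ (γ • τ) = v i₀ τ)
    (hm0 : m i₀ ≠ 0) :
    ∃ j, m j < 0 := by
  by_contra hcon
  push_neg at hcon
  haveI : NeZero N := ⟨by omega⟩
  have hNR : (0:ℝ) < (N:ℝ) := by exact_mod_cast hN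
  have hmpos : 0 < m i₀ := lt_of_le_of_ne (hcon i₀) (Ne.symm hm0)
  have hb' : ∀ i, (0:ℝ) < (b i : ℝ) := fun i => by exact_mod_cast hb i
  -- norm of exponentials
  have habs : ∀ (a : ℝ) (w : ℂ), ‖Complex.exp ((a:ℂ) * Complex.I * w)‖ = Real.exp (-(a * w.im)) := by
    intro a w
    rw [Complex.norm_exp]
    congr 1
    simp [Complex.mul_re, Complex.mul_im]
  have hm_norm : ∀ (i : Fin d) (τ : ℍ),
      ‖Complex.exp (2 * (Real.pi : ℂ) * Complex.I * (m i : ℂ) * (τ : ℂ))‖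
        = Real.exp (-(2 * Real.pi * m i * τ.im)) := by
    intro i τ
    have h1 : 2 * (Real.pi : ℂ) * Complex.I * (m i : ℂ) * (τ : ℂ)
        = ((2 * Real.pi * m i : ℝ) : ℂ) * Complex.I * (τ : ℂ) := by push_cast; ring
    rw [h1, habs, UpperHalfPlane.coe_im]
  have hq_norm : ∀ (i : Fin d) (τ : ℍ),
      ‖Complex.exp (2 * (Real.pi : ℂ) * Complex.I * (τ : ℂ) / (b i : ℂ))‖
        = Real.exp (-(2 * Real.pi / (b i) * τ.im)) := by
    intro i τ
    have h1 : 2 * (Real.pi : ℂ) * Complex.I * (τ : ℂ) / (b i : ℂ)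
        = ((2 * Real.pi / (b i) : ℝ) : ℂ) * Complex.I * (τ : ℂ) := by push_cast; ring
    rw [h1, habs, UpperHalfPlane.coe_im]
  -- bounds for the g i on suitable closed balls
  have hCex : ∀ i : Fin d, ∃ Ci : ℝ, 0 ≤ Ci ∧
      ∀ x ∈ Metric.closedBall (0:ℂ) (Real.exp (-(Real.pi / b i))), ‖g i x‖ ≤ Ci := by
    intro i
    have hsub : Metric.closedBall (0:ℂ) (Real.exp (-(Real.pi / b i))) ⊆ Metric.ball 0 1 := by
      apply Metric.closedBall_subset_ball
      rw [Real.exp_lt_one_iff]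
      exact neg_lt_zero.mpr (div_pos Real.pi_pos (hb' i))
    obtain ⟨Ci, hCi⟩ := (isCompact_closedBall (0:ℂ) _).exists_bound_of_continuousOn
      (((hg i).continuousOn).mono hsub)
    refine ⟨Ci, le_trans (norm_nonneg (g i 0)) (hCi 0 (by simp [Real.exp_nonneg])), hCi⟩
  choose C hC0 hCb using hCex
  -- pointwise bound on v i when im τ ≥ 1/2
  have hv_bd : ∀ (i : Fin d) (τ : ℍ), 1/2 ≤ τ.im →
      ‖v i τ‖ ≤ Real.exp (-(2 * Real.pi * m i * τ.im)) * C i := by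
    intro i τ hτ
    rw [hFourier i τ, norm_mul, hm_norm]
    have harg : Complex.exp (2 * (Real.pi : ℂ) * Complex.I * (τ : ℂ) / (b i : ℂ))
        ∈ Metric.closedBall (0:ℂ) (Real.exp (-(Real.pi / b i))) := by
      rw [Metric.mem_closedBall, dist_zero_right, hq_norm, Real.exp_le_exp, neg_le_neg_iff]
      have hbi := hb' i
      have h2 : (2 * Real.pi / (b i:ℝ)) * τ.im = (2 * Real.pi * τ.im) / (b i:ℝ) := by ring
      rw [h2, div_le_div_iff₀ hbi hbi]
      nlinarith [mul_nonneg (mul_nonneg Real.pi_pos.le hbi.le)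
        (by linarith : (0:ℝ) ≤ 2 * τ.im - 1)]
    exact mul_le_mul_of_nonneg_left (hCb i _ harg) (Real.exp_nonneg _)
  -- unitarity: the sum of |v i|^2 is SL(2,ℤ)-invariant
  have hHeq : ∀ (γ : SL(2,ℤ)) (τ : ℍ),
      ∑ j, Complex.normSq (v j (γ • τ)) = ∑ j, Complex.normSq (v j τ) := by
    intro γ τ
    set U : Matrix (Fin d) (Fin d) ℂ := (ρ γ : Matrix (Fin d) (Fin d) ℂ) with hU
    set x : Fin d → ℂ := fun k => v k τ with hx
    have hy : ∀ j, v j (γ • τ) = (U.mulVec x) j := by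
      intro j
      rw [htrans]
      simp [Matrix.mulVec, dotProduct, hU, hx]
    have hsq : ∀ y : Fin d → ℂ,
        ((∑ j, Complex.normSq (y j) : ℝ) : ℂ) = dotProduct (star y) y := by
      intro y
      push_cast
      simp [dotProduct, Complex.normSq_eq_conj_mul_self]
    have key : dotProduct (star (U.mulVec x)) (U.mulVec x) = dotProduct (star x) x := by
      rw [Matrix.star_mulVec, Matrix.dotProduct_mulVec, Matrix.vecMul_vecMul,
        ← Matrix.star_eq_conjTranspose, Matrix.mem_unitaryGroup_iff'.mp (hρ γ),
        Matrix.vecMul_one]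
    have h2 := (hsq (U.mulVec x)).trans (key.trans (hsq x).symm)
    have h3 : (∑ j, Complex.normSq ((U.mulVec x) j) : ℝ) = ∑ j, Complex.normSq (x j) := by
      exact_mod_cast h2
    simp_rw [hy]
    exact h3
  -- global bound on all components
  set Bd : ℝ := ∑ j, (C j)^2 with hBd
  have hfd_im : ∀ z : ℍ, z ∈ ModularGroup.fd → 1/2 ≤ z.im := by
    intro z hz
    obtain ⟨h1, h2⟩ := hz
    rw [Complex.normSq_apply, UpperHalfPlane.coe_re, UpperHalfPlane.coe_im] at h1
    have h3 : z.re ^ 2 ≤ (1/2)^2 := by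
      rw [← _root_.sq_abs]
      apply pow_le_pow_left₀ (abs_nonneg _) h2
    have h4 := z.im_pos
    nlinarith
  have hKb : ∀ (i : Fin d) (τ : ℍ), ‖v i τ‖ ≤ Real.sqrt Bd := by
    intro i τ
    obtain ⟨γ, hγ⟩ := ModularGroup.exists_smul_mem_fd τ
    have him := hfd_im _ hγ
    have h1 : Complex.normSq (v i τ) ≤ ∑ j, Complex.normSq (v j τ) :=
      Finset.single_le_sum (f := fun j => Complex.normSq (v j τ))
        (fun j _ => Complex.normSq_nonneg _) (Finset.mem_univ i)
    rw [← hHeq γ τ] at h1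
    have h2 : ∑ j, Complex.normSq (v j (γ • τ)) ≤ Bd := by
      refine Finset.sum_le_sum fun j _ => ?_
      have h3 : ‖v j (γ • τ)‖ ≤ C j := by
        refine le_trans (hv_bd j _ him) ?_
        have h4 : Real.exp (-(2 * Real.pi * m j * (γ • τ).im)) ≤ 1 := by
          rw [Real.exp_le_one_iff]
          have h6 : (0:ℝ) ≤ 2 * Real.pi * m j * (γ • τ).im :=
            mul_nonneg (mul_nonneg (mul_nonneg (by norm_num) Real.pi_pos.le) (hcon j))
              (by linarith : (0:ℝ) ≤ (γ • τ).im)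
          linarith
        nlinarith [hC0 j, Real.exp_nonneg (-(2 * Real.pi * m j * (γ • τ).im))]
      rw [Complex.normSq_eq_norm_sq]
      exact pow_le_pow_left₀ (norm_nonneg _) h3 2
    have h5 : Complex.normSq (v i τ) ≤ Bd := le_trans h1 h2
    rw [show ‖v i τ‖ = Real.sqrt (Complex.normSq (v i τ)) by
      rw [Complex.norm_def]]
    exact Real.sqrt_le_sqrt h5
  -- Γ(N)-periodicity of τ ↦ v i₀ (σ • τ)
  have hTN : (ModularGroup.T ^ (N:ℤ)) ∈ CongruenceSubgroup.Gamma N := by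
    simpa using CongruenceSubgroup.ModularGroup_T_pow_mem_Gamma (N:ℤ) (N:ℤ) dvd_rfl
  have hperiodH : ∀ (σ : SL(2,ℤ)) (τ τ' : ℍ), (τ' : ℂ) = (τ : ℂ) + (N:ℝ) →
      v i₀ (σ • τ') = v i₀ (σ • τ) := by
    intro σ τ τ' hττ'
    have h1 : τ' = ModularGroup.T ^ (N:ℤ) • τ := by
      apply UpperHalfPlane.ext
      rw [UpperHalfPlane.modular_T_zpow_smul, UpperHalfPlane.coe_vadd, hττ']
      push_cast
      ring
    have hmem : σ * ModularGroup.T ^ (N:ℤ) * σ⁻¹ ∈ CongruenceSubgroup.Gamma N :=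
      (CongruenceSubgroup.Gamma_normal N).conj_mem _ hTN σ
    rw [h1, ← mul_smul,
      show σ * ModularGroup.T ^ (N:ℤ) = (σ * ModularGroup.T ^ (N:ℤ) * σ⁻¹) * σ by group,
      mul_smul]
    exact hinv _ hmem _
  -- the periodic functions on ℂ
  set w : SL(2,ℤ) → ℂ → ℂ := fun σ => (fun τ : ℍ => v i₀ (σ • τ)) ∘ UpperHalfPlane.ofComplex with hw
  have hwval : ∀ (σ : SL(2,ℤ)) (τ : ℍ), w σ ↑τ = v i₀ (σ • τ) := by
    intro σ τ
    simp [hw, UpperHalfPlane.ofComplex_apply]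
  have hwper : ∀ σ : SL(2,ℤ), Function.Periodic (w σ) (N:ℝ) := by
    intro σ z
    by_cases hz : 0 < z.im
    · have hz' : 0 < (z + ((N:ℝ):ℂ)).im := by simpa using hz
      simp only [hw, Function.comp_apply, UpperHalfPlane.ofComplex_apply_of_im_pos hz',
        UpperHalfPlane.ofComplex_apply_of_im_pos hz]
      exact hperiodH σ ⟨z, hz⟩ ⟨z + ((N:ℝ):ℂ), hz'⟩ rfl
    · have hz2 : (z + ((N:ℝ):ℂ)).im ≤ 0 := by
        simpa using not_lt.mp hz
      simp only [hw, Function.comp_apply]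
      rw [UpperHalfPlane.ofComplex_apply_eq_of_im_nonpos hz2 (not_lt.mp hz)]
  have hwdiff : ∀ (σ : SL(2,ℤ)) ⦃z : ℂ⦄, 0 < z.im → DifferentiableAt ℂ (w σ) z := by
    intro σ
    have hu : MDifferentiable 𝓘(ℂ) 𝓘(ℂ) (fun τ : ℍ => v i₀ (σ • τ)) := by
      have h1 : (fun τ : ℍ => v i₀ (σ • τ))
          = fun τ => ∑ j, (ρ σ : Matrix (Fin d) (Fin d) ℂ) i₀ j * v j τ := by
        funext τ
        exact htrans σ τ i₀
      rw [h1, UpperHalfPlane.mdifferentiable_iff]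
      have h2 : ((fun τ : ℍ => ∑ j, (ρ σ : Matrix (Fin d) (Fin d) ℂ) i₀ j * v j τ)
          ∘ UpperHalfPlane.ofComplex)
          = fun z => ∑ j, (ρ σ : Matrix (Fin d) (Fin d) ℂ) i₀ j
              * ((v j ∘ UpperHalfPlane.ofComplex) z) := by
        funext z
        simp
      rw [h2]
      exact DifferentiableOn.fun_sum fun j _ =>
        fun z hz => ((UpperHalfPlane.mdifferentiable_iff.mp (hol j)) z hz).const_mul _
    intro z hz
    exact (UpperHalfPlane.mdifferentiable_iff.mp hu z hz).differentiableAt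
      ((Complex.continuous_im.isOpen_preimage _ isOpen_Ioi).mem_nhds hz)
  have hwbd : ∀ (σ : SL(2,ℤ)) (z : ℂ), ‖w σ z‖ ≤ Real.sqrt Bd := fun σ z =>
    hKb i₀ (σ • UpperHalfPlane.ofComplex z)
  have hev : ∀ σ : SL(2,ℤ), ∀ᶠ z in Filter.comap Complex.im Filter.atTop,
      DifferentiableAt ℂ (w σ) z :=
    fun σ => Filter.eventually_of_mem (Filter.preimage_mem_comap (Filter.Ioi_mem_atTop 0))
      (fun z hz => hwdiff σ hz)
  have hbdf : ∀ σ : SL(2,ℤ),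
      Filter.BoundedAtFilter (Filter.comap Complex.im Filter.atTop) (w σ) := by
    intro σ
    exact Asymptotics.IsBigO.of_bound (Real.sqrt Bd)
      (Filter.Eventually.of_forall (fun z => by simpa using hwbd σ z))
  -- the cusp functions
  set Φ : SL(2,ℤ) → ℂ → ℂ := fun σ => Function.Periodic.cuspFunction (N:ℝ) (w σ) with hΦ
  have heqΦ : ∀ (σ : SL(2,ℤ)) (τ : ℍ),
      Φ σ (Function.Periodic.qParam (N:ℝ) ↑τ) = v i₀ (σ • τ) := by
    intro σ τ
    simp only [hΦ]
    rw [Function.Periodic.eq_cuspFunction hNR.ne' (hwper σ)]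
    exact hwval σ τ
  have hΦdiff : ∀ (σ : SL(2,ℤ)) (q : ℂ), ‖q‖ < 1 → DifferentiableAt ℂ (Φ σ) q := by
    intro σ q hq
    rcases eq_or_ne q 0 with rfl | hq'
    · exact Function.Periodic.differentiableAt_cuspFunction_zero hNR (hwper σ) (hev σ) (hbdf σ)
    · have h1 : 0 < (Function.Periodic.invQParam (N:ℝ) q).im :=
        by
          rw [Function.Periodic.im_invQParam]
          have hl := Real.log_neg (norm_pos_iff.mpr hq') hq
          have := Real.pi_pos
          exact mul_pos_of_neg_of_neg (div_neg_of_neg_of_pos (by linarith) (by positivity)) hl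
      exact Function.Periodic.qParam_right_inv hNR.ne' hq' ▸
        Function.Periodic.differentiableAt_cuspFunction hNR.ne' (hwper σ) (hwdiff σ h1)
  -- finite quotient
  haveI hfinQ : Finite (SL(2,ℤ) ⧸ CongruenceSubgroup.Gamma N) :=
    Finite.of_equiv _ (QuotientGroup.quotientKerEquivRange
      (Matrix.SpecialLinearGroup.map (n := Fin 2) (Int.castRingHom (ZMod N)))).symm.toEquiv
  haveI : Fintype (SL(2,ℤ) ⧸ CongruenceSubgroup.Gamma N) := Fintype.ofFinite _
  -- radius
  set r : ℝ := Real.exp (-(Real.pi / N)) with hr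
  have hr0 : 0 < r := Real.exp_pos _
  have hr1 : r < 1 := by
    rw [hr, Real.exp_lt_one_iff]
    exact neg_lt_zero.mpr (div_pos Real.pi_pos hNR)
  -- maximizers on the closed ball of radius r
  have hmaxex : ∀ c : SL(2,ℤ) ⧸ CongruenceSubgroup.Gamma N,
      ∃ q ∈ Metric.closedBall (0:ℂ) r,
        IsMaxOn (fun q => ‖Φ (Quotient.out c) q‖) (Metric.closedBall (0:ℂ) r) q := by
    intro c
    apply (isCompact_closedBall (0:ℂ) r).exists_isMaxOn ⟨0, by simpa using hr0.le⟩
    intro q hq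
    have hq1 : ‖q‖ < 1 := by
      rw [Metric.mem_closedBall, dist_zero_right] at hq
      exact lt_of_le_of_lt hq hr1
    exact ((hΦdiff _ q hq1).continuousAt.norm).continuousWithinAt
  choose qc hqcm hqcM using hmaxex
  set MM : ℝ := Finset.univ.sup' Finset.univ_nonempty
    (fun c : SL(2,ℤ) ⧸ CongruenceSubgroup.Gamma N => ‖Φ (Quotient.out c) (qc c)‖) with hMM
  -- every value of v i₀ is bounded by MM
  have hvM : ∀ τ : ℍ, ‖v i₀ τ‖ ≤ MM := by
    intro τ
    obtain ⟨γ, hγ⟩ := ModularGroup.exists_smul_mem_fd τ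
    have him := hfd_im _ hγ
    set c : SL(2,ℤ) ⧸ CongruenceSubgroup.Gamma N := QuotientGroup.mk γ⁻¹ with hc
    have hmem : (Quotient.out c)⁻¹ * γ⁻¹ ∈ CongruenceSubgroup.Gamma N := by
      rw [← QuotientGroup.eq]
      rw [hc, QuotientGroup.out_eq']
    have hmem2 : γ⁻¹ * (Quotient.out c)⁻¹ ∈ CongruenceSubgroup.Gamma N := by
      have h1 := (CongruenceSubgroup.Gamma_normal N).conj_mem _ hmem (Quotient.out c)
      have h2 : Quotient.out c * ((Quotient.out c)⁻¹ * γ⁻¹) * (Quotient.out c)⁻¹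
          = γ⁻¹ * (Quotient.out c)⁻¹ := by group
      rwa [h2] at h1
    have h0 : (γ⁻¹ * (Quotient.out c)⁻¹) • (Quotient.out c • (γ • τ)) = τ := by
      rw [← mul_smul, ← mul_smul,
        show γ⁻¹ * (Quotient.out c)⁻¹ * Quotient.out c * γ = 1 by group, one_smul]
    have hval : v i₀ τ = v i₀ (Quotient.out c • (γ • τ)) := by
      conv_lhs => rw [← h0]
      exact hinv _ hmem2 _
    have hqball : Function.Periodic.qParam (N:ℝ) ↑(γ • τ) ∈ Metric.closedBall (0:ℂ) r := by
      rw [Metric.mem_closedBall, dist_zero_right,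
        Function.Periodic.norm_qParam, hr, Real.exp_le_exp, UpperHalfPlane.coe_im]
      rw [show -(Real.pi / (N:ℝ)) = -Real.pi / (N:ℝ) from (neg_div _ _).symm,
        div_le_div_iff₀ hNR hNR]
      nlinarith [mul_nonneg (mul_nonneg Real.pi_pos.le hNR.le)
        (by linarith : (0:ℝ) ≤ 2 * (γ • τ).im - 1)]
    rw [hval, ← heqΦ]
    refine le_trans (isMaxOn_iff.mp (hqcM c) _ hqball) ?_
    rw [hMM]
    exact Finset.le_sup' (fun c => ‖Φ (Quotient.out c) (qc c)‖) (Finset.mem_univ c)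
  -- the cusp functions are bounded by MM on the whole disc
  have hΦle : ∀ (σ : SL(2,ℤ)) (q : ℂ), q ≠ 0 → ‖Φ σ q‖ ≤ MM := by
    intro σ q hq
    simp only [hΦ]
    rw [Function.Periodic.cuspFunction_eq_of_nonzero _ _ hq]
    exact hvM (σ • UpperHalfPlane.ofComplex (Function.Periodic.invQParam (N:ℝ) q))
  have hΦle0 : ∀ σ : SL(2,ℤ), ‖Φ σ 0‖ ≤ MM := by
    intro σ
    have hc : ContinuousAt (Φ σ) 0 := (hΦdiff σ 0 (by simp)).continuousAt
    have ht : Filter.Tendsto (Φ σ) (nhdsWithin 0 {(0:ℂ)}ᶜ) (nhds (Φ σ 0)) :=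
      hc.continuousWithinAt.tendsto
    refine le_of_tendsto ht.norm ?_
    filter_upwards [self_mem_nhdsWithin] with q hq
    exact hΦle σ q hq
  -- a maximizer
  obtain ⟨c₀, -, hc₀⟩ := Finset.exists_mem_eq_sup' Finset.univ_nonempty
    (fun c : SL(2,ℤ) ⧸ CongruenceSubgroup.Gamma N => ‖Φ (Quotient.out c) (qc c)‖)
  set s₀ : SL(2,ℤ) := Quotient.out c₀ with hs₀
  have hq₀ball : qc c₀ ∈ Metric.ball (0:ℂ) 1 := by
    have := hqcm c₀
    rw [Metric.mem_closedBall] at this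
    rw [Metric.mem_ball]
    exact lt_of_le_of_lt this hr1
  have hc₀' : MM = ‖Φ s₀ (qc c₀)‖ := by rw [hMM]; exact hc₀
  have hmaxon : IsMaxOn (norm ∘ (Φ s₀)) (Metric.ball (0:ℂ) 1) (qc c₀) := by
    rw [isMaxOn_iff]
    intro q hq
    simp only [Function.comp_apply]
    have h1 : ‖Φ s₀ q‖ ≤ MM := by
      rcases eq_or_ne q 0 with rfl | hq'
      · exact hΦle0 s₀
      · exact hΦle s₀ q hq'
    exact le_trans h1 (le_of_eq hc₀')
  have heqon := Complex.eqOn_of_isPreconnected_of_isMaxOn_norm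
    (convex_ball (0:ℂ) 1).isPreconnected Metric.isOpen_ball
    (fun q hq => (hΦdiff s₀ q (by simpa [Metric.mem_ball, dist_zero_right] using hq)).differentiableWithinAt)
    hq₀ball hmaxon
  -- hence v i₀ is constant
  have hvconst : ∀ τ : ℍ, v i₀ τ = Φ s₀ (qc c₀) := by
    intro τ
    have h1 : v i₀ τ = Φ s₀ (Function.Periodic.qParam (N:ℝ) ↑(s₀⁻¹ • τ)) := by
      rw [heqΦ s₀ (s₀⁻¹ • τ), smul_inv_smul]
    rw [h1]
    have hmemball : Function.Periodic.qParam (N:ℝ) ↑(s₀⁻¹ • τ) ∈ Metric.ball (0:ℂ) 1 := by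
      rw [Metric.mem_ball, dist_zero_right,
        Function.Periodic.norm_qParam, UpperHalfPlane.coe_im]
      rw [Real.exp_lt_one_iff]
      have := Real.pi_pos
      have := (s₀⁻¹ • τ).im_pos
      have hnum : -2 * Real.pi * (s₀⁻¹ • τ).im < 0 := by nlinarith
      exact div_neg_of_neg_of_pos hnum hNR
    exact heqon hmemball
  -- the constant must be zero
  have hcb : ∀ t : ℝ, 1/2 ≤ t → ‖Φ s₀ (qc c₀)‖ ≤ Real.exp (-(2 * Real.pi * m i₀ * t)) * C i₀ := by
    intro t ht
    have ht0 : 0 < t := by linarith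
    have htim : (0:ℝ) < ((t:ℂ) * Complex.I).im := by simpa using ht0
    set τt : ℍ := ⟨(t:ℂ) * Complex.I, htim⟩ with hτt
    have htim2 : τt.im = t := by
      rw [hτt]
      show ((t:ℂ) * Complex.I).im = t
      simp
    rw [← hvconst τt]
    have := hv_bd i₀ τt (by rw [htim2]; exact ht)
    rwa [htim2] at this
  have hcst0 : Φ s₀ (qc c₀) = 0 := by
    have h1 : Filter.Tendsto (fun t : ℝ => 2 * Real.pi * m i₀ * t) Filter.atTop Filter.atTop := by
      apply Filter.Tendsto.const_mul_atTop (by positivity) Filter.tendsto_id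
    have h2 : Filter.Tendsto (fun t : ℝ => -(2 * Real.pi * m i₀ * t)) Filter.atTop Filter.atBot :=
      Filter.tendsto_neg_atTop_atBot.comp h1
    have h3 : Filter.Tendsto (fun t : ℝ => Real.exp (-(2 * Real.pi * m i₀ * t)) * C i₀)
        Filter.atTop (nhds (0 * C i₀)) :=
      (Real.tendsto_exp_atBot.comp h2).mul_const _
    rw [zero_mul] at h3
    have h4 : ‖Φ s₀ (qc c₀)‖ ≤ 0 :=
      ge_of_tendsto h3 (Filter.eventually_atTop.mpr ⟨1/2, fun t ht => hcb t ht⟩)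
    simpa using le_antisymm h4 (norm_nonneg _)
  -- so v i₀ ≡ 0, contradicting g i₀ 0 ≠ 0
  have hv0 : ∀ τ : ℍ, v i₀ τ = 0 := fun τ => (hvconst τ).trans hcst0
  have hgz : ∀ t : ℝ, 0 < t →
      g i₀ (Complex.exp (2 * (Real.pi : ℂ) * Complex.I * ((t:ℂ) * Complex.I) / (b i₀ : ℂ))) = 0 := by
    intro t ht0
    have htim : (0:ℝ) < ((t:ℂ) * Complex.I).im := by simpa using ht0
    set τt : ℍ := ⟨(t:ℂ) * Complex.I, htim⟩ with hτt
    have h1 := hFourier i₀ τt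
    rw [hv0 τt] at h1
    have h2 := h1.symm
    rcases mul_eq_zero.mp h2 with h3 | h3
    · exact absurd h3 (Complex.exp_ne_zero _)
    · exact h3
  have hX : Filter.Tendsto
      (fun t : ℝ => Complex.exp (2 * (Real.pi : ℂ) * Complex.I * ((t:ℂ) * Complex.I) / (b i₀ : ℂ)))
      Filter.atTop (nhds 0) := by
    rw [tendsto_zero_iff_norm_tendsto_zero]
    have hnorm : ∀ t : ℝ,
        ‖Complex.exp (2 * (Real.pi : ℂ) * Complex.I * ((t:ℂ) * Complex.I) / (b i₀ : ℂ))‖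
          = Real.exp (-(2 * Real.pi / (b i₀) * t)) := by
      intro t
      have h1 : 2 * (Real.pi : ℂ) * Complex.I * ((t:ℂ) * Complex.I) / (b i₀ : ℂ)
          = ((2 * Real.pi / (b i₀) : ℝ) : ℂ) * Complex.I * ((t:ℂ) * Complex.I) := by
        push_cast
        ring
      rw [h1, habs]
      congr 1
      simp
    simp_rw [hnorm]
    have h1 : Filter.Tendsto (fun t : ℝ => 2 * Real.pi / (b i₀) * t) Filter.atTop Filter.atTop := by
      apply Filter.Tendsto.const_mul_atTop ?_ Filter.tendsto_id
      have := Real.pi_pos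
      have := hb' i₀
      positivity
    exact Real.tendsto_exp_atBot.comp (Filter.tendsto_neg_atTop_atBot.comp h1)
  have hgc : ContinuousAt (g i₀) 0 :=
    ((hg i₀).differentiableAt (Metric.ball_mem_nhds 0 one_pos)).continuousAt
  have hcomp : Filter.Tendsto
      (fun t : ℝ => g i₀ (Complex.exp (2 * (Real.pi : ℂ) * Complex.I * ((t:ℂ) * Complex.I) / (b i₀ : ℂ))))
      Filter.atTop (nhds (g i₀ 0)) := hgc.tendsto.comp hX
  have hzero : Filter.Tendsto
      (fun t : ℝ => g i₀ (Complex.exp (2 * (Real.pi : ℂ) * Complex.I * ((t:ℂ) * Complex.I) / (b i₀ : ℂ))))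
      Filter.atTop (nhds 0) := by
    apply Filter.Tendsto.congr' ?_ tendsto_const_nhds
    filter_upwards [Filter.eventually_gt_atTop 0] with t ht
    exact (hgz t ht).symm
  exact hg0 i₀ (tendsto_nhds_unique hcomp hzero)
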